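/- arXiv:2411.07064 — 2 statements merged into one kernel-verified Lean document; each statement's English description precedes it below -/
import Mathlib

section
/- Let W(x,y) = exp(γ y² / (2σ²)) on 𝕋 × ℝ, and let L = y ∂_x - (κ sin x + γ y) ∂_y + (σ²/2) ∂²_y with κ, γ, σ > 0. Then L W(x,y) = (γ/(2σ²)) (−γ y² + σ² − 2κ y sin x) W(x,y), and in particular L W(x,y) ≤ −c W(x,y) + d for any c > 0, where d = sup over y in the set C = {y : (γ/(2σ²))(−γy² + σ² + 2κ|y|) + c > 0} of [(γ/(2σ²))(−γy² + σ² + 2κ|y|) + c] e^{γ y²/(2σ²)}. -/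
open Real

theorem stmt4 (κ γ σ : ℝ) (hκ : 0 < κ) (hγ : 0 < γ) (hσ : 0 < σ)
    (W : ℝ → ℝ → ℝ) (hW : W = fun _ y => Real.exp (γ * y ^ 2 / (2 * σ ^ 2)))
    (LW : ℝ → ℝ → ℝ)
    (hLW : LW = fun x y => y * deriv (fun x' => W x' y) x
      - (κ * Real.sin x + γ * y) * deriv (fun y' => W x y') y
      + σ ^ 2 / 2 * deriv (deriv (fun y' => W x y')) y) :
    (∀ x y, LW x y = γ / (2 * σ ^ 2) * (-γ * y ^ 2 + σ ^ 2 - 2 * κ * y * Real.sin x) * W x y)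
    ∧ ∀ c : ℝ, 0 < c →
      ∀ x y, LW x y ≤ -c * W x y +
        sSup ((fun y' => (γ / (2 * σ ^ 2) * (-γ * y' ^ 2 + σ ^ 2 + 2 * κ * |y'|) + c)
              * Real.exp (γ * y' ^ 2 / (2 * σ ^ 2))) ''
          {y' : ℝ | 0 < γ / (2 * σ ^ 2) * (-γ * y' ^ 2 + σ ^ 2 + 2 * κ * |y'|) + c}) := by
  subst hW hLW
  have hσ2 : (σ:ℝ) ^ 2 ≠ 0 := by positivity
  have hE : ∀ y : ℝ, HasDerivAt (fun y' : ℝ => Real.exp (γ * y' ^ 2 / (2 * σ ^ 2)))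
      (γ * y / σ ^ 2 * Real.exp (γ * y ^ 2 / (2 * σ ^ 2))) y := by
    intro y
    have h1 : HasDerivAt (fun y' : ℝ => γ * y' ^ 2 / (2 * σ ^ 2)) (γ * y / σ ^ 2) y := by
      have := ((hasDerivAt_pow 2 y).const_mul γ).div_const (2 * σ ^ 2)
      convert this using 1
      · rfl
      · rfl
      norm_num
      ring
    simpa [mul_comm] using h1.exp
  have hEd : deriv (fun y' : ℝ => Real.exp (γ * y' ^ 2 / (2 * σ ^ 2)))
      = fun y => γ * y / σ ^ 2 * Real.exp (γ * y ^ 2 / (2 * σ ^ 2)) :=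
    funext fun y => (hE y).deriv
  have hE2 : ∀ y : ℝ, deriv (fun y' => γ * y' / σ ^ 2 * Real.exp (γ * y' ^ 2 / (2 * σ ^ 2))) y
      = γ / σ ^ 2 * Real.exp (γ * y ^ 2 / (2 * σ ^ 2))
        + γ * y / σ ^ 2 * (γ * y / σ ^ 2 * Real.exp (γ * y ^ 2 / (2 * σ ^ 2))) := by
    intro y
    have h1 : HasDerivAt (fun y' : ℝ => γ * y' / σ ^ 2) (γ / σ ^ 2) y := by
      have := (hasDerivAt_id y).const_mul γ |>.div_const (σ ^ 2)
      simpa using this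
    have := h1.mul (hE y)
    have h3 : deriv (fun y' => γ * y' / σ ^ 2 * Real.exp (γ * y' ^ 2 / (2 * σ ^ 2))) y = _ := this.deriv
    simpa [mul_comm, mul_left_comm, add_comm] using h3
  have key : ∀ x y : ℝ,
      (y * deriv (fun _ : ℝ => Real.exp (γ * y ^ 2 / (2 * σ ^ 2))) x
      - (κ * Real.sin x + γ * y) * deriv (fun y' => Real.exp (γ * y' ^ 2 / (2 * σ ^ 2))) y
      + σ ^ 2 / 2 * deriv (deriv (fun y' => Real.exp (γ * y' ^ 2 / (2 * σ ^ 2)))) y)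
      = γ / (2 * σ ^ 2) * (-γ * y ^ 2 + σ ^ 2 - 2 * κ * y * Real.sin x)
        * Real.exp (γ * y ^ 2 / (2 * σ ^ 2)) := by
    intro x y
    rw [hEd]
    beta_reduce
    rw [hE2, deriv_const]
    field_simp
    ring
  refine ⟨fun x y => key x y, ?_⟩
  intro c hc x y
  beta_reduce
  rw [key x y]
  set E : ℝ → ℝ := fun y' => Real.exp (γ * y' ^ 2 / (2 * σ ^ 2)) with hEdef
  set a : ℝ := γ / (2 * σ ^ 2) with ha
  have haa : 0 < a := by rw [ha]; positivity
  have hEpos : ∀ y', 0 < E y' := by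
    intro y'; rw [hEdef]; exact Real.exp_pos _
  have hEcont : Continuous E := by
    rw [hEdef]
    exact Real.continuous_exp.comp (by fun_prop)
  clear_value a E
  clear hE hEd hE2 key ha
  set f : ℝ → ℝ := fun y' => (a * (-γ * y' ^ 2 + σ ^ 2 + 2 * κ * |y'|) + c) * E y' with hf
  set S : Set ℝ := {y' : ℝ | 0 < a * (-γ * y' ^ 2 + σ ^ 2 + 2 * κ * |y'|) + c} with hS
  obtain ⟨R, hR⟩ : ∃ R : ℝ, R = (2 * a * κ + a * σ ^ 2 + c) / (a * γ) + 1 := ⟨_, rfl⟩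
  have hR1 : 1 ≤ R := by
    rw [hR]
    have h0 : 0 ≤ (2 * a * κ + a * σ ^ 2 + c) / (a * γ) := by positivity
    linarith
  have hRdef : a * γ * R = 2 * a * κ + a * σ ^ 2 + c + a * γ := by
    rw [hR]; field_simp; try ring
  have hSsub : S ⊆ Set.Icc (-R) R := by
    intro y' hy'
    simp only [hS, Set.mem_setOf_eq] at hy'
    have hu0 : (0:ℝ) ≤ |y'| := abs_nonneg _
    have hysq : |y'| ^ 2 = y' ^ 2 := sq_abs y'
    have habs : |y'| ≤ R := by
      by_contra h
      push_neg at h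
      have hpos : (0:ℝ) < a * γ * |y'| := by
        have : (0:ℝ) < |y'| := lt_of_le_of_lt (by linarith) h
        exact mul_pos (mul_pos haa hγ) this
      have F1 : a * γ * |y'| * R < a * γ * |y'| * |y'| := by
        exact mul_lt_mul_of_pos_left h hpos
      have F2 : a * γ * R * |y'| = (2 * a * κ + a * σ ^ 2 + c + a * γ) * |y'| := by
        rw [hRdef]
      have F3 : (a * σ ^ 2 + c) * 1 ≤ (a * σ ^ 2 + c) * |y'| := by
        apply mul_le_mul_of_nonneg_left _ (by positivity)
        linarith
      have F6 : 0 ≤ a * γ * |y'| := le_of_lt hpos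
      nlinarith [F1, F2, F3, F6, hy', hysq]
    simpa [Set.mem_Icc] using abs_le.mp habs
  have hfcont : Continuous f := by
    rw [hf]
    apply Continuous.mul _ hEcont
    have h1 : Continuous fun y' : ℝ => |y'| := _root_.continuous_abs
    fun_prop
  have hbdd : BddAbove (f '' S) := by
    have hcomp : IsCompact (f '' Set.Icc (-R) R) := (isCompact_Icc).image hfcont
    exact hcomp.bddAbove.mono (Set.image_mono hSsub)
  have h0S : (0:ℝ) ∈ S := by
    simp only [hS, Set.mem_setOf_eq, abs_zero]
    nlinarith [mul_pos haa (pow_pos hσ 2)]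
  have hSup0 : 0 ≤ sSup (f '' S) := by
    have hf0 : f 0 ≤ sSup (f '' S) := le_csSup hbdd (Set.mem_image_of_mem f h0S)
    have hpos0 : 0 < f 0 := by
      have h0 := h0S
      simp only [hS, Set.mem_setOf_eq] at h0
      exact mul_pos h0 (hEpos 0)
    linarith
  have hsin : -(2 * κ * (y * Real.sin x)) ≤ 2 * κ * |y| := by
    have h2 : |y * Real.sin x| ≤ |y| := by
      rw [abs_mul]
      nlinarith [abs_sin_le_one x, abs_nonneg y, abs_nonneg (Real.sin x)]
    have h3 : -(y * Real.sin x) ≤ |y| := le_trans (neg_le_abs _) h2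
    nlinarith [h3, hκ.le]
  have hkey2 : a * (-γ * y ^ 2 + σ ^ 2 - 2 * κ * y * Real.sin x) * E y + c * E y ≤ f y := by
    simp only [hf]
    have hXY : -γ * y ^ 2 + σ ^ 2 - 2 * κ * y * Real.sin x
        ≤ -γ * y ^ 2 + σ ^ 2 + 2 * κ * |y| := by nlinarith [hsin]
    have := mul_le_mul_of_nonneg_right
      (mul_le_mul_of_nonneg_left hXY haa.le) (hEpos y).le
    nlinarith [this, mul_pos hc (hEpos y)]
  have hfy : f y ≤ sSup (f '' S) := by
    rcases le_or_gt (a * (-γ * y ^ 2 + σ ^ 2 + 2 * κ * |y|) + c) 0 with h | h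
    · have hle : f y ≤ 0 := by
        simp only [hf]
        exact mul_nonpos_of_nonpos_of_nonneg h (hEpos y).le
      linarith
    · exact le_csSup hbdd ⟨y, h, rfl⟩
  have himg : (fun y' => (a * (-γ * y' ^ 2 + σ ^ 2 + 2 * κ * |y'|) + c)
      * Real.exp (γ * y' ^ 2 / (2 * σ ^ 2))) = f := by rw [hf, hEdef]
  have hEy : Real.exp (γ * y ^ 2 / (2 * σ ^ 2)) = E y := by rw [hEdef]
  rw [himg, hEy]
  linarith [hkey2, hfy]
end

section
/- For the pendulum projective vector fields X̃₀(x,y,θ) = (y, −γy − κ sin x, −γ sin θ + cos θ − κ cos x (cos θ + 1) − 1) and X̃₂ = (0, σ, 0), the iterated Lie bracket [[X̃₂, X̃₀], X̃₀] equals (−γσ, σ(γ² − κ cos x), κσ sin x (cos θ + 1)). -/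
/-- Lie bracket of vector fields on ℝ³ (identified with ℝ × ℝ × ℝ):
`[U, V](p) = DV(p) U(p) − DU(p) V(p)`. -/
noncomputable def lieBracket (U V : ℝ × ℝ × ℝ → ℝ × ℝ × ℝ) : ℝ × ℝ × ℝ → ℝ × ℝ × ℝ :=
  fun p => fderiv ℝ V p (U p) - fderiv ℝ U p (V p)

noncomputable def Fst : (ℝ × ℝ × ℝ) →L[ℝ] ℝ := ContinuousLinearMap.fst ℝ ℝ (ℝ × ℝ)
noncomputable def SndFst : (ℝ × ℝ × ℝ) →L[ℝ] ℝ :=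
  (ContinuousLinearMap.fst ℝ ℝ ℝ).comp (ContinuousLinearMap.snd ℝ ℝ (ℝ × ℝ))
noncomputable def SndSnd : (ℝ × ℝ × ℝ) →L[ℝ] ℝ :=
  (ContinuousLinearMap.snd ℝ ℝ ℝ).comp (ContinuousLinearMap.snd ℝ ℝ (ℝ × ℝ))

noncomputable def D0 (κ γ : ℝ) (p : ℝ × ℝ × ℝ) : (ℝ × ℝ × ℝ) →L[ℝ] (ℝ × ℝ × ℝ) :=
  SndFst.prod (((-γ) • SndFst - κ • (Real.cos p.1 • Fst)).prod
    (((-γ) • (Real.cos p.2.2 • SndSnd) + (-Real.sin p.2.2) • SndSnd)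
      - ((κ * Real.cos p.1) • ((-Real.sin p.2.2) • SndSnd)
        + (Real.cos p.2.2 + 1) • (κ • ((-Real.sin p.1) • Fst)))))

lemma hD0 (κ γ : ℝ) (p : ℝ × ℝ × ℝ) :
    HasFDerivAt (fun p : ℝ × ℝ × ℝ => (p.2.1, -γ * p.2.1 - κ * Real.sin p.1,
      -γ * Real.sin p.2.2 + Real.cos p.2.2 - κ * Real.cos p.1 * (Real.cos p.2.2 + 1) - 1))
      (D0 κ γ p) p := by
  have hx : HasFDerivAt (fun p : ℝ × ℝ × ℝ => p.1) Fst p := hasFDerivAt_fst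
  have hy : HasFDerivAt (fun p : ℝ × ℝ × ℝ => p.2.1) SndFst p :=
    hasFDerivAt_fst.comp p hasFDerivAt_snd
  have hθ : HasFDerivAt (fun p : ℝ × ℝ × ℝ => p.2.2) SndSnd p :=
    hasFDerivAt_snd.comp p hasFDerivAt_snd
  have hsinx : HasFDerivAt (fun p : ℝ × ℝ × ℝ => Real.sin p.1) (Real.cos p.1 • Fst) p :=
    (Real.hasDerivAt_sin p.1).comp_hasFDerivAt p hx
  have hcosx : HasFDerivAt (fun p : ℝ × ℝ × ℝ => Real.cos p.1) ((-Real.sin p.1) • Fst) p :=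
    (Real.hasDerivAt_cos p.1).comp_hasFDerivAt p hx
  have hsinθ : HasFDerivAt (fun p : ℝ × ℝ × ℝ => Real.sin p.2.2) (Real.cos p.2.2 • SndSnd) p :=
    by have := (Real.hasDerivAt_sin p.2.2).comp_hasFDerivAt p hθ; exact this
  have hcosθ : HasFDerivAt (fun p : ℝ × ℝ × ℝ => Real.cos p.2.2) ((-Real.sin p.2.2) • SndSnd) p :=
    by have := (Real.hasDerivAt_cos p.2.2).comp_hasFDerivAt p hθ; exact this
  exact HasFDerivAt.prodMk hy (HasFDerivAt.prodMk ((hy.const_mul (-γ)).sub (hsinx.const_mul κ))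
    ((((hsinθ.const_mul (-γ)).add hcosθ).sub
      (((hcosx.const_mul κ).mul (hcosθ.add_const 1)))).sub_const 1))

theorem stmt6 (κ γ σ : ℝ)
    (X0 : ℝ × ℝ × ℝ → ℝ × ℝ × ℝ)
    (hX0 : X0 = fun p => (p.2.1, -γ * p.2.1 - κ * Real.sin p.1,
      -γ * Real.sin p.2.2 + Real.cos p.2.2 - κ * Real.cos p.1 * (Real.cos p.2.2 + 1) - 1))
    (X2 : ℝ × ℝ × ℝ → ℝ × ℝ × ℝ) (hX2 : X2 = fun _ => (0, σ, 0)) :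
    ∀ p : ℝ × ℝ × ℝ, lieBracket (lieBracket X2 X0) X0 p
      = (-γ * σ, σ * (γ ^ 2 - κ * Real.cos p.1),
          κ * σ * Real.sin p.1 * (Real.cos p.2.2 + 1)) := by
  subst hX0 hX2
  have hfd : ∀ p : ℝ × ℝ × ℝ, fderiv ℝ (fun p : ℝ × ℝ × ℝ => (p.2.1, -γ * p.2.1 - κ * Real.sin p.1,
      -γ * Real.sin p.2.2 + Real.cos p.2.2 - κ * Real.cos p.1 * (Real.cos p.2.2 + 1) - 1)) p
      = D0 κ γ p := fun p => (hD0 κ γ p).fderiv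
  have hA : lieBracket (fun _ : ℝ × ℝ × ℝ => ((0:ℝ), σ, (0:ℝ)))
      (fun p : ℝ × ℝ × ℝ => (p.2.1, -γ * p.2.1 - κ * Real.sin p.1,
      -γ * Real.sin p.2.2 + Real.cos p.2.2 - κ * Real.cos p.1 * (Real.cos p.2.2 + 1) - 1))
      = fun _ => (σ, -γ * σ, (0:ℝ)) := by
    funext p
    simp only [lieBracket, hfd, fderiv_fun_const, Pi.zero_apply, ContinuousLinearMap.zero_apply,
      sub_zero, D0, ContinuousLinearMap.prod_apply, ContinuousLinearMap.coe_sub',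
      ContinuousLinearMap.coe_smul', Pi.sub_apply, Pi.smul_apply,
      ContinuousLinearMap.add_apply, ContinuousLinearMap.zero_apply, Fst, SndFst, SndSnd,
      ContinuousLinearMap.coe_comp', Function.comp_apply, ContinuousLinearMap.coe_fst',
      ContinuousLinearMap.coe_snd', smul_eq_mul]
    norm_num
  intro p
  simp only [lieBracket, hA, hfd, fderiv_fun_const, Pi.zero_apply, ContinuousLinearMap.zero_apply,
    sub_zero, D0, ContinuousLinearMap.prod_apply, ContinuousLinearMap.coe_sub',
    ContinuousLinearMap.coe_smul', Pi.sub_apply, Pi.smul_apply,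
    ContinuousLinearMap.add_apply, ContinuousLinearMap.zero_apply, Fst, SndFst, SndSnd,
    ContinuousLinearMap.coe_comp', Function.comp_apply, ContinuousLinearMap.coe_fst',
    ContinuousLinearMap.coe_snd', smul_eq_mul, Prod.mk.injEq]
  refine ⟨by ring, by ring, by ring⟩
end
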